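/- Fix reals c, q, L > 0, D ≥ 1 and Q₂ ∈ ℝ. Then the point (x₀, y₀) := √(4c/(4D² − 1))·(Q₂ + q/2, L) lies in the topological frontier (boundary) of B₂ in ℝ². -/

import Mathlib

open Real

noncomputable section

/-- the ellipse norm `‖(u₁,u₂)‖_@ = √(u₁² + c u₂²)`. -/
def nAt (c : ℝ) (u : ℝ × ℝ) : ℝ := Real.sqrt (u.1 ^ 2 + c * u.2 ^ 2)

/-- `Θ_x = √(x² + c q²)`. -/
def thetaAt (c q x : ℝ) : ℝ := Real.sqrt (x ^ 2 + c * q ^ 2)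

/-- the set `B₂`. -/
def B2 (c q L D Q2 : ℝ) : Set (ℝ × ℝ) :=
  {p | ∀ s i : ℤ, i ≠ 0 →
    D * q * |p.2| / thetaAt c q p.1 <
      nAt c
        (((s : ℝ) * q + (i : ℝ) * Q2) * p.1 * p.2 / (thetaAt c q p.1) ^ 2 -
            (i : ℝ) * L,
          ((s : ℝ) * q + (i : ℝ) * Q2) * q * p.2 / (thetaAt c q p.1) ^ 2)}

set_option maxHeartbeats 1600000 in
/-- the key algebraic identity. -/
lemma keyid (c q L D Q2 T lam s i x y th b : ℝ)
    (hb : b = s * q + i * Q2)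
    (hth0 : th ≠ 0) (hth : th = x ^ 2 + c * q ^ 2)
    (hcT : c = T ^ 2 * (4 * D ^ 2 - 1) / 4)
    (hx : x = lam * T * (Q2 + q / 2)) (hy : y = lam * T * L) :
    ((b * x * y / th - i * L) ^ 2 + c * (b * q * y / th) ^ 2) * th -
        (D * q * y) ^ 2 =
      (T * L) ^ 2 * q ^ 2 *
        (lam ^ 2 * ((s - i / 2) ^ 2 - D ^ 2) + i ^ 2 * (4 * D ^ 2 - 1) / 4) := by
  field_simp
  subst hb hth hcT hx hy
  ring

/-- the arithmetic positivity lemma. -/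
lemma keypos (D lam : ℝ) (hD : 1 ≤ D) (hl0 : 0 < lam) (hl1 : lam < 1)
    (s i : ℤ) (hi : i ≠ 0) :
    0 < lam ^ 2 * (((s : ℝ) - (i : ℝ) / 2) ^ 2 - D ^ 2) +
        (i : ℝ) ^ 2 * (4 * D ^ 2 - 1) / 4 := by
  have hl2 : lam ^ 2 < 1 := by nlinarith
  have hi1 : (1 : ℝ) ≤ (i : ℝ) ^ 2 := by
    have h1 : (1 : ℤ) ≤ i ^ 2 := by
      rcases lt_or_gt_of_ne hi with h' | h' <;> nlinarith
    exact_mod_cast h1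
  by_cases h : D ^ 2 ≤ ((s : ℝ) - (i : ℝ) / 2) ^ 2
  · have f1 : (0:ℝ) ≤ lam ^ 2 * (((s : ℝ) - (i : ℝ) / 2) ^ 2 - D ^ 2) :=
      mul_nonneg (sq_nonneg lam) (by linarith)
    have h4 : (0:ℝ) < 4 * D ^ 2 - 1 := by nlinarith
    have f2 : (0:ℝ) < (i : ℝ) ^ 2 * (4 * D ^ 2 - 1) / 4 :=
      div_pos (mul_pos (by nlinarith) h4) (by norm_num)
    linarith
  · push_neg at h
    by_cases h2 : i = 1 ∨ i = -1
    · have hodd : (1 : ℝ) ≤ ((2 * s - i : ℤ) : ℝ) ^ 2 := by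
        have hne : 2 * s - i ≠ 0 := by rcases h2 with h2 | h2 <;> omega
        have h1 : (1 : ℤ) ≤ (2 * s - i) ^ 2 := by
          rcases lt_or_gt_of_ne hne with h' | h' <;> nlinarith
        exact_mod_cast h1
      have hsq : (1 : ℝ) / 4 ≤ ((s : ℝ) - (i : ℝ) / 2) ^ 2 := by
        push_cast at hodd
        nlinarith
      have hii : ((i : ℝ)) ^ 2 = 1 := by
        rcases h2 with h2 | h2 <;> simp [h2]
      rw [hii]
      have a1 : (0:ℝ) ≤ lam ^ 2 * (((s : ℝ) - (i : ℝ) / 2) ^ 2 - 1 / 4) :=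
        mul_nonneg (sq_nonneg lam) (by linarith)
      have a2 : (0:ℝ) < (1 - lam ^ 2) * (D ^ 2 - 1 / 4) :=
        mul_pos (by linarith) (by nlinarith)
      nlinarith
    · push_neg at h2
      have hi4 : (4 : ℝ) ≤ (i : ℝ) ^ 2 := by
        have h5 : i ≤ -2 ∨ 2 ≤ i := by omega
        have h1 : (4 : ℤ) ≤ i ^ 2 := by rcases h5 with h' | h' <;> nlinarith
        exact_mod_cast h1
      have a1 : (0:ℝ) < (1 - lam ^ 2) * (D ^ 2 - ((s : ℝ) - (i : ℝ) / 2) ^ 2) :=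
        mul_pos (by linarith) (by linarith)
      have a2 : (0:ℝ) ≤ ((i:ℝ) ^ 2 - 4) * (4 * D ^ 2 - 1) / 4 := by
        apply div_nonneg _ (by norm_num)
        exact mul_nonneg (by linarith) (by nlinarith)
      nlinarith [sq_nonneg ((s:ℝ) - (i:ℝ)/2)]

theorem statement13
    (c q L D Q2 : ℝ) (hc : 0 < c) (hq : 0 < q) (hL : 0 < L) (hD : 1 ≤ D) :
    (Real.sqrt (4 * c / (4 * D ^ 2 - 1)) * (Q2 + q / 2),
      Real.sqrt (4 * c / (4 * D ^ 2 - 1)) * L) ∈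
        frontier (B2 c q L D Q2) := by
  have h4D : (0:ℝ) < 4 * D ^ 2 - 1 := by nlinarith
  set T := Real.sqrt (4 * c / (4 * D ^ 2 - 1)) with hTdef
  have hTpos : 0 < T := Real.sqrt_pos.mpr (by positivity)
  have hcT : c = T ^ 2 * (4 * D ^ 2 - 1) / 4 := by
    rw [hTdef, Real.sq_sqrt (by positivity : (0:ℝ) ≤ 4 * c / (4 * D ^ 2 - 1))]
    field_simp
  -- membership of scaled points
  have hmem : ∀ lam : ℝ, 0 < lam → lam < 1 →
      ((lam * T * (Q2 + q / 2), lam * T * L) : ℝ × ℝ) ∈ B2 c q L D Q2 := by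
    intro lam hl0 hl1 s i hi
    simp only [B2, Set.mem_setOf_eq] at *
    set x : ℝ := lam * T * (Q2 + q / 2) with hxd
    set y : ℝ := lam * T * L with hyd
    have hy : 0 < y := by positivity
    have hth : 0 < x ^ 2 + c * q ^ 2 := by positivity
    have hthne : x ^ 2 + c * q ^ 2 ≠ 0 := ne_of_gt hth
    have hθ : thetaAt c q x = Real.sqrt (x ^ 2 + c * q ^ 2) := rfl
    have hθpos : 0 < thetaAt c q x := by rw [hθ]; exact Real.sqrt_pos.mpr hth
    have hθsq : (thetaAt c q x) ^ 2 = x ^ 2 + c * q ^ 2 :=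
      Real.sq_sqrt (le_of_lt hth)
    rw [nAt]
    rw [Real.lt_sqrt (by positivity)]
    rw [div_pow, hθsq, div_lt_iff₀ hth]
    have key := keyid c q L D Q2 T lam (s : ℝ) (i : ℝ) x y
      (x ^ 2 + c * q ^ 2) ((s : ℝ) * q + (i : ℝ) * Q2) rfl hthne rfl hcT hxd hyd
    have pos := keypos D lam hD hl0 hl1 s i hi
    have hTL : 0 < (T * L) ^ 2 * q ^ 2 := by positivity
    simp only [hθsq]
    rw [abs_of_pos hy]
    nlinarith [mul_pos hTL pos]
  -- the point is not in B2
  have hnot : ((T * (Q2 + q / 2), T * L) : ℝ × ℝ) ∉ B2 c q L D Q2 := by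
    intro hmem'
    have h := hmem' 0 1 one_ne_zero
    simp only [B2, Set.mem_setOf_eq] at h
    set x : ℝ := T * (Q2 + q / 2) with hxd
    set y : ℝ := T * L with hyd
    have hy : 0 < y := by positivity
    have hth : 0 < x ^ 2 + c * q ^ 2 := by positivity
    have hthne : x ^ 2 + c * q ^ 2 ≠ 0 := ne_of_gt hth
    have hθsq : (thetaAt c q x) ^ 2 = x ^ 2 + c * q ^ 2 :=
      Real.sq_sqrt (le_of_lt hth)
    have hθpos : 0 < thetaAt c q x := Real.sqrt_pos.mpr hth
    rw [nAt, Real.lt_sqrt (by positivity), div_pow, hθsq, div_lt_iff₀ hth] at h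
    have key := keyid c q L D Q2 T 1 ((0:ℤ) : ℝ) ((1:ℤ) : ℝ) x y
      (x ^ 2 + c * q ^ 2) (((0:ℤ) : ℝ) * q + ((1:ℤ) : ℝ) * Q2) rfl hthne rfl hcT
      (by rw [hxd]; ring) (by rw [hyd]; ring)
    simp only [hθsq] at h
    rw [abs_of_pos hy] at h
    push_cast at key h
    nlinarith [h, key]
  -- closure via the sequence lam n = 1 - 1/(n+2)
  have hseq : Filter.Tendsto
      (fun n : ℕ => (((1 - 1 / ((n : ℝ) + 2)) * T * (Q2 + q / 2),
        (1 - 1 / ((n : ℝ) + 2)) * T * L) : ℝ × ℝ)) Filter.atTop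
      (nhds (T * (Q2 + q / 2), T * L)) := by
    have h1 : Filter.Tendsto (fun n : ℕ => 1 - 1 / ((n : ℝ) + 2)) Filter.atTop
        (nhds 1) := by
      have h3 : Filter.Tendsto (fun n : ℕ => ((n : ℝ) + 2)) Filter.atTop
          Filter.atTop :=
        Filter.tendsto_atTop_add_const_right _ 2 tendsto_natCast_atTop_atTop
      have h2 : Filter.Tendsto (fun n : ℕ => 1 / ((n : ℝ) + 2)) Filter.atTop
          (nhds 0) := by
        simpa [one_div, Pi.inv_def] using h3.inv_tendsto_atTop
      have := (tendsto_const_nhds (x := (1:ℝ)) (f := Filter.atTop (α := ℕ))).sub h2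
      simpa using this
    have hA : Filter.Tendsto (fun n : ℕ => (1 - 1 / ((n : ℝ) + 2)) * T * (Q2 + q / 2))
        Filter.atTop (nhds (T * (Q2 + q / 2))) := by
      have := (h1.mul_const T).mul_const (Q2 + q / 2)
      simpa using this
    have hB : Filter.Tendsto (fun n : ℕ => (1 - 1 / ((n : ℝ) + 2)) * T * L)
        Filter.atTop (nhds (T * L)) := by
      have := (h1.mul_const T).mul_const L
      simpa using this
    exact hA.prodMk_nhds hB
  have hclos : ((T * (Q2 + q / 2), T * L) : ℝ × ℝ) ∈ closure (B2 c q L D Q2) := by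
    refine mem_closure_of_tendsto hseq (Filter.Eventually.of_forall fun n => ?_)
    refine hmem _ ?_ ?_
    · have : (0:ℝ) < (n : ℝ) + 2 := by positivity
      have : 1 / ((n : ℝ) + 2) ≤ 1 / 2 := by
        apply div_le_div_of_nonneg_left <;> [norm_num; norm_num; linarith [Nat.cast_nonneg (α := ℝ) n]]
      linarith
    · have : (0:ℝ) < 1 / ((n : ℝ) + 2) := by positivity
      linarith
  exact ⟨hclos, fun h => hnot (interior_subset h)⟩
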